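/- Let A, B : [t₀,∞) → M_m(ℝ) be continuous, let S : [t₀,∞) → M_m(ℝ) be continuous with S(t) symmetric for all t, let S₀ ∈ M_m(ℝ) be symmetric, and set Λ(t) = 2∫_{t₀}^t S(ν) dν + S₀. If K : [t₀,∞) → M_m(ℝ) is a C¹ solution of the matrix differential equation 2K̇(t) + A(t)K(t) + K(t)A(t)ᵀ + A(t)S(t) − S(t)A(t)ᵀ + B(t)Λ(t) − Λ(t)B(t)ᵀ = 0 whose initial value K(t₀) is skew-symmetric, then K(t) is skew-symmetric for every t ≥ t₀. -/

import Mathlib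

open Matrix Set intervalIntegral

attribute [local instance] Matrix.frobeniusNormedAddCommGroup Matrix.frobeniusNormedSpace

/-- `Λ(t) = 2∫_{t₀}^t S(ν) dν + S₀`. -/
noncomputable def Lam (t₀ : ℝ) {m : ℕ} (S : ℝ → Matrix (Fin m) (Fin m) ℝ)
    (S₀ : Matrix (Fin m) (Fin m) ℝ) (t : ℝ) : Matrix (Fin m) (Fin m) ℝ :=
  (2:ℝ) • (∫ ν in t₀..t, S ν) + S₀

/-- If `K` is a `C¹` solution on `[t₀,∞)` of
`2K̇ + AK + KAᵀ + AS − SAᵀ + BΛ − ΛBᵀ = 0` whose initial value `K(t₀)` is skew-symmetric,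
then `K(t)` is skew-symmetric for all `t ≥ t₀`. -/
theorem stmt_5 {m : ℕ} (t₀ : ℝ) (A B S : ℝ → Matrix (Fin m) (Fin m) ℝ)
    (hA : ContinuousOn A (Ici t₀)) (hB : ContinuousOn B (Ici t₀))
    (hS : ContinuousOn S (Ici t₀)) (hSsymm : ∀ t ∈ Ici t₀, (S t)ᵀ = S t)
    (S₀ : Matrix (Fin m) (Fin m) ℝ) (hS₀ : S₀ᵀ = S₀)
    (K : ℝ → Matrix (Fin m) (Fin m) ℝ) (hK : ContDiffOn ℝ 1 K (Ici t₀))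
    (hode : ∀ t ∈ Ici t₀,
      (2:ℝ) • derivWithin K (Ici t₀) t + A t * K t + K t * (A t)ᵀ
        + A t * S t - S t * (A t)ᵀ
        + B t * Lam t₀ S S₀ t - Lam t₀ S S₀ t * (B t)ᵀ = 0)
    (hK0 : (K t₀)ᵀ = -K t₀) :
    ∀ t ∈ Ici t₀, (K t)ᵀ = -K t := by
  -- transpose as a continuous linear map
  let T : Matrix (Fin m) (Fin m) ℝ →L[ℝ] Matrix (Fin m) (Fin m) ℝ :=
    LinearMap.toContinuousLinearMap
      (Matrix.transposeLinearEquiv (Fin m) (Fin m) ℝ ℝ).toLinearMap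
  have hT : ∀ X : Matrix (Fin m) (Fin m) ℝ, T X = Xᵀ := fun X => rfl
  -- Λ is symmetric on [t₀, ∞)
  have hΛ : ∀ t ∈ Ici t₀, (Lam t₀ S S₀ t)ᵀ = Lam t₀ S S₀ t := by
    intro t ht
    have hint : @IntervalIntegrable _ UniformSpace.toTopologicalSpace NormedAddGroup.toENormedAddMonoid S MeasureTheory.volume t₀ t := by
      apply ContinuousOn.intervalIntegrable
      refine hS.mono ?_
      rw [uIcc_of_le ht]
      exact Icc_subset_Ici_self
    have h1 : (∫ ν in t₀..t, S ν)ᵀ = ∫ ν in t₀..t, (S ν)ᵀ := by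
      rw [← hT]
      refine (T.intervalIntegral_comp_comm hint).symm.trans ?_
      rfl
    have h2 : (∫ ν in t₀..t, (S ν)ᵀ) = ∫ ν in t₀..t, S ν := by
      apply intervalIntegral.integral_congr
      intro ν hν
      rw [uIcc_of_le ht] at hν
      exact hSsymm ν hν.1
    rw [Lam, transpose_add, transpose_smul, h1, h2, hS₀]
  set M : ℝ → Matrix (Fin m) (Fin m) ℝ := fun t => K t + (K t)ᵀ with hM
  set M' : ℝ → Matrix (Fin m) (Fin m) ℝ :=
    fun t => derivWithin K (Ici t₀) t + (derivWithin K (Ici t₀) t)ᵀ with hM'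
  have hMderiv : ∀ t ∈ Ici t₀, HasDerivWithinAt M (M' t) (Ici t₀) t := by
    intro t ht
    have hKd := ((hK.differentiableOn one_ne_zero) t ht).hasDerivWithinAt
    exact hKd.add (T.hasFDerivAt.comp_hasDerivWithinAt t hKd)
  have hM'eq : ∀ t ∈ Ici t₀, M' t = (-(2⁻¹:ℝ)) • (A t * M t + M t * (A t)ᵀ) := by
    intro t ht
    have h1 := hode t ht
    have h2 := congrArg Matrix.transpose h1
    simp only [transpose_add, transpose_sub, transpose_mul, transpose_smul, transpose_zero,
      transpose_transpose, hSsymm t ht, hΛ t ht] at h2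
    have h3 : (2:ℝ) • M' t + (A t * M t + M t * (A t)ᵀ) = 0 := by
      have e := congrArg₂ HAdd.hAdd h1 h2
      rw [add_zero] at e
      rw [← e]
      simp only [hM, hM', smul_add, mul_add, add_mul]
      abel
    have h4 : (2:ℝ) • M' t = -(A t * M t + M t * (A t)ᵀ) :=
      eq_neg_of_add_eq_zero_left h3
    calc M' t = (2⁻¹:ℝ) • ((2:ℝ) • M' t) := by rw [smul_smul]; norm_num
    _ = (-(2⁻¹:ℝ)) • (A t * M t + M t * (A t)ᵀ) := by
        rw [h4, smul_neg, neg_smul]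
  have hMzero : ∀ t ∈ Ici t₀, M t = 0 := by
    intro b hb
    obtain ⟨C, hC⟩ :=
      isCompact_Icc.exists_bound_of_continuousOn (hA.mono (Icc_subset_Ici_self : Icc t₀ b ⊆ Ici t₀))
    have hMcont : ContinuousOn M (Icc t₀ b) := by
      have : ContinuousOn M (Ici t₀) :=
        (hK.continuousOn).add (T.continuous.comp_continuousOn hK.continuousOn)
      exact this.mono Icc_subset_Ici_self
    have key := norm_le_gronwallBound_of_norm_deriv_right_le (δ := 0) (K := C) (ε := 0)
      hMcont
      (fun x hx => (hMderiv x hx.1).mono (Ici_subset_Ici.mpr hx.1))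
      (by
        have : M t₀ = 0 := by rw [hM]; simp [hK0]
        simp [this])
      (fun x hx => by
        rw [hM'eq x hx.1]
        have hAM : ‖A x * M x‖ ≤ ‖A x‖ * ‖M x‖ := Matrix.frobenius_norm_mul _ _
        have hMA : ‖M x * (A x)ᵀ‖ ≤ ‖M x‖ * ‖A x‖ := by
          calc ‖M x * (A x)ᵀ‖ ≤ ‖M x‖ * ‖(A x)ᵀ‖ := Matrix.frobenius_norm_mul _ _
          _ = ‖M x‖ * ‖A x‖ := by rw [Matrix.frobenius_norm_transpose]
        have hCx : ‖A x‖ ≤ C := hC x ⟨hx.1, hx.2.le⟩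
        have hMn : (0:ℝ) ≤ ‖M x‖ := norm_nonneg _
        calc ‖(-(2⁻¹:ℝ)) • (A x * M x + M x * (A x)ᵀ)‖
            = 2⁻¹ * ‖A x * M x + M x * (A x)ᵀ‖ := by
              rw [norm_smul]; norm_num
          _ ≤ 2⁻¹ * (‖A x * M x‖ + ‖M x * (A x)ᵀ‖) := by
              have := norm_add_le (A x * M x) (M x * (A x)ᵀ); nlinarith
          _ ≤ 2⁻¹ * (‖A x‖ * ‖M x‖ + ‖M x‖ * ‖A x‖) := by nlinarith
          _ = ‖A x‖ * ‖M x‖ := by ring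
          _ ≤ C * ‖M x‖ + 0 := by nlinarith)
    have := key b ⟨hb, le_rfl⟩
    rw [gronwallBound_ε0_δ0] at this
    exact norm_le_zero_iff.mp this
  intro t ht
  have := hMzero t ht
  rw [hM] at this
  exact eq_neg_of_add_eq_zero_right this
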